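/- (Schur–Wielandt, first part.) Let G be a finite abelian group of order n and let 𝒮 be an S-ring partition over G. Then for every integer m coprime to n and every class X ∈ 𝒮, the set X^(m) = {x^m : x ∈ X} is again a class of 𝒮. -/

import Mathlib

/-- An S-ring partition over a group `G`: a partition of `G` containing `{1}`,
closed under taking inverses, and with well-defined structure constants. -/
def IsSRing {G : Type*} [Group G] (S : Set (Set G)) : Prop :=
  Setoid.IsPartition S ∧
  {(1 : G)} ∈ S ∧
  (∀ X ∈ S, (fun x : G => x⁻¹) '' X ∈ S) ∧
  (∀ X ∈ S, ∀ Y ∈ S, ∀ Z ∈ S, ∀ z ∈ Z, ∀ z' ∈ Z,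
    {p : G × G | p.1 ∈ X ∧ p.2 ∈ Y ∧ p.1 * p.2 = z}.ncard =
    {p : G × G | p.1 ∈ X ∧ p.2 ∈ Y ∧ p.1 * p.2 = z'}.ncard)

/-- An `S`-set: a union of classes of the partition `S`. -/
def IsSSet {G : Type*} (S : Set (Set G)) (X : Set G) : Prop :=
  ∃ T ⊆ S, X = ⋃₀ T


open Finset

namespace SWaux

variable {G : Type*} [CommGroup G] [Fintype G] {S : Set (Set G)}

/-- The class of an element in a partition. -/
noncomputable def cls (hpart : Setoid.IsPartition S) (x : G) : Set G :=
  (hpart.2 x).choose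

lemma cls_mem (hpart : Setoid.IsPartition S) (x : G) : cls hpart x ∈ S :=
  (hpart.2 x).choose_spec.1.1

lemma mem_cls (hpart : Setoid.IsPartition S) (x : G) : x ∈ cls hpart x :=
  (hpart.2 x).choose_spec.1.2

lemma cls_eq (hpart : Setoid.IsPartition S) {x : G} {Z : Set G} (hZ : Z ∈ S) (hx : x ∈ Z) :
    Z = cls hpart x :=
  (hpart.2 x).choose_spec.2 Z ⟨hZ, hx⟩

/-- Coefficients constant on classes. -/
def ClsConst {k : Type*} [CommSemiring k] (S : Set (Set G)) (f : MonoidAlgebra k G) : Prop :=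
  ∀ Z ∈ S, ∀ z ∈ Z, ∀ z' ∈ Z, f.coeff z = f.coeff z'

open scoped Classical in
lemma mul_apply_fin {k : Type*} [CommSemiring k] (f g : MonoidAlgebra k G) (z : G) :
    (f * g).coeff z = ∑ q : G × G, if q.1 * q.2 = z then f.coeff q.1 * g.coeff q.2 else 0 := by
  classical
  rw [MonoidAlgebra.coeff_mul]
  rw [Finsupp.sum]
  have h1 : ∀ a : G, (g.coeff.sum fun a₂ b₂ => if a * a₂ = z then f.coeff a * b₂ else 0)
      = ∑ b : G, (if a * b = z then f.coeff a * g.coeff b else 0) := by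
    intro a
    rw [Finsupp.sum]
    apply Finset.sum_subset (Finset.subset_univ _)
    intro b _ hb
    simp [Finsupp.notMem_support_iff.mp hb]
  simp_rw [h1]
  have h2 : (∑ a ∈ f.coeff.support, ∑ b : G, if a * b = z then f.coeff a * g.coeff b else 0)
      = ∑ a : G, ∑ b : G, (if a * b = z then f.coeff a * g.coeff b else 0) := by
    apply Finset.sum_subset (Finset.subset_univ _)
    intro a _ ha
    simp [Finsupp.notMem_support_iff.mp ha]
  rw [h2, Fintype.sum_prod_type]

open scoped Classical in
lemma clsConst_mul {k : Type*} [CommSemiring k] (hS : IsSRing S)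
    {f g : MonoidAlgebra k G} (hf : ClsConst S f) (hg : ClsConst S g) :
    ClsConst S (f * g) := by
  obtain ⟨hpart, -, -, hcount⟩ := hS
  intro Z hZ z hz z' hz'
  rw [mul_apply_fin, mul_apply_fin]
  have key : ∀ w : G,
      (∑ q : G × G, if q.1 * q.2 = w then f.coeff q.1 * g.coeff q.2 else 0)
      = ∑ DE ∈ (Set.toFinite S).toFinset ×ˢ (Set.toFinite S).toFinset,
          ∑ q ∈ Finset.univ.filter (fun q : G × G => (cls hpart q.1, cls hpart q.2) = DE),
            (if q.1 * q.2 = w then f.coeff q.1 * g.coeff q.2 else 0) := by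
    intro w
    rw [Finset.sum_fiberwise_of_maps_to]
    intro q _
    simp only [Finset.mem_product, Set.Finite.mem_toFinset]
    exact ⟨cls_mem hpart _, cls_mem hpart _⟩
  rw [key z, key z']
  apply Finset.sum_congr rfl
  intro DE hDE
  simp only [Finset.mem_product, Set.Finite.mem_toFinset] at hDE
  obtain ⟨hD, hE⟩ := hDE
  have hfib : Finset.univ.filter (fun q : G × G => (cls hpart q.1, cls hpart q.2) = DE)
      = Finset.univ.filter (fun q : G × G => q.1 ∈ DE.1 ∧ q.2 ∈ DE.2) := by
    ext q
    simp only [Finset.mem_filter, Finset.mem_univ, true_and, Prod.ext_iff]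
    constructor
    · rintro ⟨h1, h2⟩
      exact ⟨h1 ▸ mem_cls hpart q.1, h2 ▸ mem_cls hpart q.2⟩
    · rintro ⟨h1, h2⟩
      exact ⟨(cls_eq hpart hD h1).symm, (cls_eq hpart hE h2).symm⟩
  rw [hfib]
  obtain ⟨d, hd⟩ := Set.nonempty_iff_ne_empty.mpr (fun h => hpart.1 (h ▸ hD))
  obtain ⟨e, he⟩ := Set.nonempty_iff_ne_empty.mpr (fun h => hpart.1 (h ▸ hE))
  have hval : ∀ q : G × G, q.1 ∈ DE.1 → q.2 ∈ DE.2 → f.coeff q.1 * g.coeff q.2 = f.coeff d * g.coeff e := by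
    intro q h1 h2
    rw [hf DE.1 hD q.1 h1 d hd, hg DE.2 hE q.2 h2 e he]
  have hcard : ∀ w : G,
      (∑ q ∈ Finset.univ.filter (fun q : G × G => q.1 ∈ DE.1 ∧ q.2 ∈ DE.2),
        if q.1 * q.2 = w then f.coeff q.1 * g.coeff q.2 else 0)
      = ({q : G × G | q.1 ∈ DE.1 ∧ q.2 ∈ DE.2 ∧ q.1 * q.2 = w}.ncard) • (f.coeff d * g.coeff e) := by
    intro w
    rw [← Finset.sum_filter]
    have hset : {q : G × G | q.1 ∈ DE.1 ∧ q.2 ∈ DE.2 ∧ q.1 * q.2 = w}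
        = ((Finset.univ.filter (fun q : G × G => q.1 ∈ DE.1 ∧ q.2 ∈ DE.2)).filter
            (fun q => q.1 * q.2 = w) : Finset (G × G)) := by
      ext q
      simp only [Finset.coe_filter, Finset.mem_filter, Finset.mem_univ, true_and,
        Set.mem_setOf_eq]
      tauto
    rw [hset, Set.ncard_coe_finset, ← Finset.sum_const]
    apply Finset.sum_congr rfl
    intro q hq
    simp only [Finset.mem_filter, Finset.mem_univ, true_and] at hq
    exact hval q hq.1.1 hq.1.2
  rw [hcard z, hcard z', hcount DE.1 hD DE.2 hE Z hZ z hz z' hz']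

open scoped Classical in
lemma prime_mem_const (hS : IsSRing S) {p : ℕ} (hp : p.Prime) (hpn : ¬ p ∣ Fintype.card G)
    {X : Set G} (hX : X ∈ S) {Z : Set G} (hZ : Z ∈ S) {z z' : G} (hz : z ∈ Z) (hz' : z' ∈ Z) :
    z ∈ (fun x : G => x ^ p) '' X ↔ z' ∈ (fun x : G => x ^ p) '' X := by
  have hpart := hS.1
  haveI : Fact p.Prime := ⟨hp⟩
  haveI hchar : CharP (MonoidAlgebra (ZMod p) G) p :=
    charP_of_injective_ringHom (R := ZMod p)
      (f := MonoidAlgebra.singleOneRingHom (R := ZMod p) (M := G))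
      (MonoidAlgebra.single_right_injective (m := 1)) p
  set Xf := (Set.toFinite X).toFinset with hXf
  set η : MonoidAlgebra (ZMod p) G := ∑ x ∈ Xf, MonoidAlgebra.single x 1 with hη
  have happly : ∀ (c : G → G) (w : G),
      (∑ x ∈ Xf, MonoidAlgebra.single (c x) (1 : ZMod p)).coeff w
        = ∑ x ∈ Xf, if c x = w then (1 : ZMod p) else 0 := by
    intro c w
    rw [MonoidAlgebra.coeff_sum, Finsupp.finset_sum_apply]
    exact Finset.sum_congr rfl fun x _ => Finsupp.single_apply
  have hval : ∀ w : G, η.coeff w = if w ∈ X then (1 : ZMod p) else 0 := by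
    intro w
    rw [hη, happly (fun x => x) w, Finset.sum_ite_eq' Xf w (fun _ => (1 : ZMod p))]
    simp [hXf, Set.Finite.mem_toFinset]
  have hconst : ClsConst S η := by
    intro Zc hZc zz hzz zz' hzz'
    rw [hval, hval]
    have hiff : zz ∈ X ↔ zz' ∈ X := by
      constructor
      · intro h
        exact ((cls_eq hpart hX h).trans (cls_eq hpart hZc hzz).symm) ▸ hzz'
      · intro h
        exact ((cls_eq hpart hX h).trans (cls_eq hpart hZc hzz').symm) ▸ hzz
    by_cases h : zz ∈ X
    · rw [if_pos h, if_pos (hiff.mp h)]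
    · rw [if_neg h, if_neg (fun h' => h (hiff.mpr h'))]
  have hpow : ∀ n : ℕ, ClsConst S (η ^ (n + 1)) := by
    intro n
    induction n with
    | zero => simpa using hconst
    | succ n ih => rw [pow_succ]; exact clsConst_mul hS ih hconst
  have hfrob : η ^ p = ∑ x ∈ Xf, MonoidAlgebra.single (x ^ p) (1 : ZMod p) := by
    rw [hη, sum_pow_char]
    exact Finset.sum_congr rfl fun x _ => by
      rw [MonoidAlgebra.single_pow, one_pow]
  have hcop : (Nat.card G).Coprime p :=
    Nat.Coprime.symm (hp.coprime_iff_not_dvd.mpr (by rwa [Nat.card_eq_fintype_card]))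
  have hinj : Function.Injective (fun x : G => x ^ p) := hcop.pow_left_bijective.injective
  have hval2 : ∀ w : G,
      (η ^ p).coeff w = if w ∈ (fun x : G => x ^ p) '' X then (1 : ZMod p) else 0 := by
    intro w
    have himg := Finset.sum_image (s := Xf) (g := fun x : G => x ^ p)
      (f := fun y => if y = w then (1 : ZMod p) else 0) (fun x _ y _ h => hinj h)
    rw [hfrob, happly (fun x => x ^ p) w, ← himg,
      Finset.sum_ite_eq' _ w (fun _ => (1 : ZMod p))]
    have hmem : w ∈ Xf.image (fun x : G => x ^ p) ↔ w ∈ (fun x : G => x ^ p) '' X := by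
      simp only [hXf, Set.Finite.mem_toFinset, Finset.mem_image, Set.mem_image]
    rw [if_congr hmem rfl rfl]
  have heq := (by simpa [Nat.sub_add_cancel hp.one_lt.le] using hpow (p - 1) :
      ClsConst S (η ^ p)) Z hZ z hz z' hz'
  rw [hval2 z, hval2 z'] at heq
  constructor
  · intro h1
    by_contra h2
    rw [if_pos h1, if_neg h2] at heq
    exact one_ne_zero heq
  · intro h2
    by_contra h1
    rw [if_neg h1, if_pos h2] at heq
    exact zero_ne_one heq

lemma isSSet_iff (hpart : Setoid.IsPartition S) {Y : Set G} :
    IsSSet S Y ↔ ∀ z ∈ Y, ∀ Z ∈ S, z ∈ Z → Z ⊆ Y := by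
  constructor
  · rintro ⟨T, hT, rfl⟩ z hz Z hZ hzZ
    obtain ⟨W, hWT, hzW⟩ := hz
    have hZW : Z = W := (cls_eq hpart hZ hzZ).trans (cls_eq hpart (hT hWT) hzW).symm
    intro u hu
    exact Set.mem_sUnion.mpr ⟨W, hWT, hZW ▸ hu⟩
  · intro h
    refine ⟨{Z | Z ∈ S ∧ Z ⊆ Y}, fun Z hZ => hZ.1, ?_⟩
    ext y
    constructor
    · intro hy
      exact ⟨cls hpart y, ⟨cls_mem hpart y, h y hy _ (cls_mem hpart y) (mem_cls hpart y)⟩,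
        mem_cls hpart y⟩
    · rintro ⟨W, ⟨-, hWY⟩, hyW⟩
      exact hWY hyW

lemma sset_pow_prime (hS : IsSRing S) {p : ℕ} (hp : p.Prime) (hpn : ¬ p ∣ Fintype.card G)
    {Y : Set G} (hY : IsSSet S Y) : IsSSet S ((fun x : G => x ^ p) '' Y) := by
  have hpart := hS.1
  rw [isSSet_iff hpart] at hY ⊢
  rintro z ⟨y, hyY, rfl⟩ Z hZ hzZ u hu
  have hD := hY y hyY (cls hpart y) (cls_mem hpart y) (mem_cls hpart y)
  have h1 : (fun x : G => x ^ p) y ∈ (fun x : G => x ^ p) '' (cls hpart y) :=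
    ⟨y, mem_cls hpart y, rfl⟩
  have h2 := (prime_mem_const hS hp hpn (cls_mem hpart y) hZ hzZ hu).mp h1
  exact Set.image_mono hD h2

lemma sset_pow_nat (hS : IsSRing S) :
    ∀ k : ℕ, 1 ≤ k → Nat.Coprime k (Fintype.card G) →
      ∀ Y : Set G, IsSSet S Y → IsSSet S ((fun x : G => x ^ k) '' Y) := by
  intro k
  induction k using Nat.strong_induction_on with
  | _ k ih =>
    intro hk1 hkc Y hY
    rcases eq_or_lt_of_le hk1 with h1 | h1
    · simpa [← h1, pow_one, Set.image_id'] using hY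
    · have hpk : k.minFac ∣ k := Nat.minFac_dvd k
      have hpp : k.minFac.Prime := Nat.minFac_prime (by omega)
      have hk' : k / k.minFac * k.minFac = k := Nat.div_mul_cancel hpk
      have himg : (fun x : G => x ^ k) '' Y
          = (fun x : G => x ^ k.minFac) '' ((fun x : G => x ^ (k / k.minFac)) '' Y) := by
        rw [Set.image_image]
        apply Set.image_congr'
        intro x
        rw [← pow_mul, hk']
      rw [himg]
      have hdivlt : k / k.minFac < k := Nat.div_lt_self (by omega) hpp.one_lt
      have hdiv1 : 1 ≤ k / k.minFac :=
        (Nat.one_le_div_iff hpp.pos).mpr (Nat.minFac_le (by omega))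
      have hdc : (k / k.minFac).Coprime (Fintype.card G) :=
        Nat.Coprime.coprime_dvd_left ⟨k.minFac, hk'.symm⟩ hkc
      have hcpn : Nat.Coprime k.minFac (Fintype.card G) :=
        Nat.Coprime.coprime_dvd_left hpk hkc
      have hpn : ¬ k.minFac ∣ Fintype.card G := fun hdvd =>
        hpp.one_lt.ne' (hcpn.eq_one_of_dvd hdvd)
      exact sset_pow_prime hS hpp hpn (ih (k / k.minFac) hdivlt hdiv1 hdc Y hY)

end SWaux

/-- Schur–Wielandt, first part: for an S-ring over a finite
abelian group of order `n`, the `m`-th power map, for `m` coprime to `n`,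
takes basic sets to basic sets. -/
theorem schur_wielandt_pow {G : Type*} [CommGroup G] [Fintype G]
    (S : Set (Set G)) (hS : IsSRing S)
    (m : ℤ) (hm : Int.gcd m (Fintype.card G) = 1) :
    ∀ X ∈ S, (fun x : G => x ^ m) '' X ∈ S := by
  classical
  intro X hX
  have hpart := hS.1
  have hXne : X.Nonempty := Set.nonempty_iff_ne_empty.mpr (fun h => hpart.1 (h ▸ hX))
  by_cases hn1 : Fintype.card G = 1
  · haveI : Subsingleton G := Fintype.card_le_one_iff_subsingleton.mp (le_of_eq hn1)
    have himg : (fun x : G => x ^ m) '' X = X := by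
      rw [(hXne.image _).eq_univ, hXne.eq_univ]
    rwa [himg]
  · have hn2 : 2 ≤ Fintype.card G := by have := Fintype.card_pos (α := G); omega
    have hnz : ((Fintype.card G : ℤ)) ≠ 0 := by exact_mod_cast (by omega : Fintype.card G ≠ 0)
    set k : ℕ := (m % (Fintype.card G : ℤ)).toNat with hkdef
    have hmn : (m % (Fintype.card G : ℤ)) = (k : ℤ) :=
      (Int.toNat_of_nonneg (Int.emod_nonneg m hnz)).symm
    have hmk : ∀ x : G, x ^ m = x ^ k := by
      intro x
      rw [← zpow_natCast, ← hmn]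
      exact (zpow_mod_card x m).symm
    have hkc : Nat.Coprime k (Fintype.card G) := by
      have h0 : IsCoprime m (Fintype.card G : ℤ) := Int.isCoprime_iff_gcd_eq_one.mpr hm
      have h1 : IsCoprime (m % (Fintype.card G : ℤ)) (Fintype.card G : ℤ) := by
        rw [Int.emod_def, sub_eq_add_neg, ← mul_neg]
        exact h0.add_mul_left_left _
      rw [hmn] at h1
      have := Int.isCoprime_iff_gcd_eq_one.mp h1
      rwa [Int.gcd_natCast_natCast] at this
    have hk1 : 1 ≤ k := by
      rcases Nat.eq_zero_or_pos k with h | h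
      · rw [h] at hkc
        exact absurd (Nat.coprime_zero_left _ |>.mp hkc) (by omega)
      · exact h
    have hXs : IsSSet S X := ⟨{X}, by simpa using hX, by simp⟩
    have hY : IsSSet S ((fun x : G => x ^ k) '' X) := SWaux.sset_pow_nat hS k hk1 hkc X hXs
    set k' : ℕ := k ^ ((Fintype.card G).totient - 1) with hk'def
    have htot : 1 ≤ (Fintype.card G).totient := Nat.totient_pos.mpr (by omega)
    have hkk' : k * k' ≡ 1 [MOD (Fintype.card G)] := by
      have heq : k * k' = k ^ (Fintype.card G).totient := by
        rw [hk'def, ← pow_succ']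
        congr 1
        omega
      rw [heq]
      exact Nat.ModEq.pow_totient hkc
    have hk'c : Nat.Coprime k' (Fintype.card G) := Nat.Coprime.pow_left _ hkc
    have hk'1 : 1 ≤ k' := Nat.one_le_iff_ne_zero.mpr (pow_ne_zero _ (by omega))
    have hid1 : ∀ x : G, (x ^ k) ^ k' = x := by
      intro x
      obtain ⟨s, hs⟩ : ∃ s, k * k' = Fintype.card G * s + 1 := by
        have h1 : (k * k') % Fintype.card G = 1 % Fintype.card G := hkk'
        have h2 : 1 % Fintype.card G = 1 := Nat.mod_eq_of_lt (by omega)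
        have h3 := Nat.div_add_mod (k * k') (Fintype.card G)
        exact ⟨k * k' / Fintype.card G, by omega⟩
      rw [← pow_mul, hs, pow_add, pow_mul, pow_card_eq_one, one_pow, pow_one, one_mul]
    have hid2 : ∀ x : G, (x ^ k') ^ k = x := by
      intro x
      rw [← pow_mul, mul_comm, pow_mul]
      exact hid1 x
    obtain ⟨x₀, hx₀⟩ := hXne
    have hz₀ : (x₀ ^ k) ∈ (fun x : G => x ^ k) '' X := ⟨x₀, hx₀, rfl⟩
    have hZS : SWaux.cls hpart (x₀ ^ k) ∈ S := SWaux.cls_mem hpart _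
    have hZY : SWaux.cls hpart (x₀ ^ k) ⊆ (fun x : G => x ^ k) '' X :=
      (SWaux.isSSet_iff hpart).mp hY _ hz₀ _ hZS (SWaux.mem_cls hpart _)
    have hWs : IsSSet S ((fun x : G => x ^ k') '' SWaux.cls hpart (x₀ ^ k)) :=
      SWaux.sset_pow_nat hS k' hk'1 hk'c _ ⟨{SWaux.cls hpart (x₀ ^ k)}, by simpa using hZS, by simp⟩
    have hWX : (fun x : G => x ^ k') '' SWaux.cls hpart (x₀ ^ k) ⊆ X := by
      rintro w ⟨u, huZ, rfl⟩
      obtain ⟨x, hxX, rfl⟩ := hZY huZ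
      simpa [hid1 x] using hxX
    have hWne : ((fun x : G => x ^ k') '' SWaux.cls hpart (x₀ ^ k)).Nonempty :=
      ⟨_, ⟨x₀ ^ k, SWaux.mem_cls hpart _, rfl⟩⟩
    have hXW : X ⊆ (fun x : G => x ^ k') '' SWaux.cls hpart (x₀ ^ k) := by
      obtain ⟨w₀, hw₀⟩ := hWne
      have h1 : X = SWaux.cls hpart w₀ := SWaux.cls_eq hpart hX (hWX hw₀)
      have h2 : SWaux.cls hpart w₀ ⊆ (fun x : G => x ^ k') '' SWaux.cls hpart (x₀ ^ k) :=
        (SWaux.isSSet_iff hpart).mp hWs _ hw₀ _ (SWaux.cls_mem hpart _) (SWaux.mem_cls hpart _)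
      exact h1 ▸ h2
    have hWXeq : (fun x : G => x ^ k') '' SWaux.cls hpart (x₀ ^ k) = X :=
      Set.Subset.antisymm hWX hXW
    have hYZ : (fun x : G => x ^ k) '' X = SWaux.cls hpart (x₀ ^ k) := by
      have himgW : (fun x : G => x ^ k) '' ((fun x : G => x ^ k') '' SWaux.cls hpart (x₀ ^ k))
          = SWaux.cls hpart (x₀ ^ k) := by
        rw [Set.image_image]
        ext u
        constructor
        · rintro ⟨v, hv, rfl⟩
          simpa [hid2 v] using hv
        · intro hu
          exact ⟨u, hu, hid2 u⟩
      rw [hWXeq] at himgW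
      exact himgW
    have hfinal : (fun x : G => x ^ m) '' X = SWaux.cls hpart (x₀ ^ k) := by
      rw [← hYZ]
      exact Set.image_congr' hmk
    rw [hfinal]
    exact hZS
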